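/- arXiv:2401.01716 — 6 statements merged into one kernel-verified Lean document; each statement's English description precedes it below -/
import Mathlib

section
/- Let G be a finite graph, let W = {W_1, …, W_ℓ} be a partition of V(G), and fix an orientation of the edges of G whose endpoints lie in different classes of W. For each vertex v define d̂(v) as the number of distinct classes W_j containing the tail of some arc with head v. Then for every connected subgraph H of G, if p is the number of classes of W intersected by V(H), then Σ_{v ∈ V(H)} d̂(v) ≥ p − 1. -/
variable {V : Type*}

theorem stmt2 [Fintype V] (G : SimpleGraph V) (ℓ : ℕ) (W : Fin ℓ → Set V)
    (hpart : ∀ v : V, ∃! i, v ∈ W i)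
    (A : V → V → Prop)
    (horient : ∀ u v : V,
      (A u v ∨ A v u) ↔ (G.Adj u v ∧ ∀ i, ¬ (u ∈ W i ∧ v ∈ W i)))
    (hasym : ∀ u v, A u v → ¬ A v u)
    (dhat : V → ℕ)
    (hdhat : ∀ v, dhat v = Nat.card {i : Fin ℓ // ∃ u ∈ W i, A u v})
    (H : Finset V) (hconn : (G.induce (↑H : Set V)).Connected)
    (p : ℕ) (hp : p = Nat.card {i : Fin ℓ // ∃ v ∈ H, v ∈ W i}) :
    (p : ℤ) - 1 ≤ ∑ v ∈ H, (dhat v : ℤ) := by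
  classical
  -- class-of function
  choose f hf hfu using hpart
  -- the class set
  set S : Finset (Fin ℓ) := Finset.univ.filter (fun i => ∃ v ∈ H, v ∈ W i) with hS
  have hpS : p = S.card := by
    rw [hp, Nat.card_eq_fintype_card, Fintype.card_subtype]
  -- the pair set
  set T : Finset ((_ : V) × Fin ℓ) :=
    H.sigma (fun v => Finset.univ.filter (fun i => ∃ u ∈ W i, A u v)) with hT
  have hsum : ∑ v ∈ H, (dhat v : ℤ) = (T.card : ℤ) := by
    rw [hT, Finset.card_sigma]
    push_cast
    refine Finset.sum_congr rfl fun v _ => ?_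
    rw [hdhat, Nat.card_eq_fintype_card, Fintype.card_subtype]
  rcases Nat.eq_zero_or_pos p with hp0 | hppos
  · rw [hp0, hsum]
    have : (0 : ℤ) ≤ (T.card : ℤ) := by positivity
    omega
  -- pick a base class
  have hSne : S.Nonempty := by
    rw [← Finset.card_pos, ← hpS]; exact hppos
  obtain ⟨i₀, hi₀⟩ := hSne
  obtain ⟨v₀, hv₀H, hv₀W⟩ := (Finset.mem_filter.mp hi₀).2
  have : Nonempty V := ⟨v₀⟩
  -- quotient graph on classes
  set Q : SimpleGraph (Fin ℓ) :=
    { Adj := fun i j => i ≠ j ∧ ∃ u v, u ∈ H ∧ v ∈ H ∧ u ∈ W i ∧ v ∈ W j ∧ (A u v ∨ A v u)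
      symm := by
        constructor
        rintro i j ⟨hne, u, v, hu, hv, hui, hvj, harc⟩
        exact ⟨hne.symm, v, u, hv, hu, hvj, hui, harc.symm⟩
      loopless := ⟨fun i h => h.1 rfl⟩ } with hQ
  -- walks in the induced graph give reachability of classes
  have hwalk : ∀ (a b : (↑H : Set V)), (G.induce (↑H : Set V)).Walk a b →
      Q.Reachable (f a) (f b) := by
    intro a b w
    induction w with
    | nil => exact SimpleGraph.Reachable.refl _
    | @cons x y z h w ih =>
      refine SimpleGraph.Reachable.trans ?_ ih
      by_cases hcom : ∃ i, (x : V) ∈ W i ∧ (y : V) ∈ W i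
      · obtain ⟨i, hxi, hyi⟩ := hcom
        have : f (x : V) = f (y : V) := by
          rw [← hfu _ _ hxi, ← hfu _ _ hyi]
        rw [this]
      · have hGadj : G.Adj (x : V) (y : V) := h
        have harc : A (x : V) y ∨ A (y : V) x := by
          rw [horient]
          exact ⟨hGadj, fun i hi => hcom ⟨i, hi⟩⟩
        have hne : f (x : V) ≠ f (y : V) := by
          intro heq
          exact hcom ⟨f (x : V), hf _, heq ▸ hf _⟩
        exact SimpleGraph.Adj.reachable
          ⟨hne, x, y, x.2, y.2, hf _, hf _, harc⟩
  -- reachability from i₀ to every class in S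
  have hreach : ∀ j ∈ S, Q.Reachable i₀ j := by
    intro j hj
    obtain ⟨v, hvH, hvW⟩ := (Finset.mem_filter.mp hj).2
    have h1 : i₀ = f v₀ := hfu _ _ hv₀W
    have h2 : j = f v := hfu _ _ hvW
    rw [h1, h2]
    obtain ⟨w⟩ := hconn.preconnected ⟨v₀, hv₀H⟩ ⟨v, hvH⟩
    exact hwalk _ _ w
  -- key: for each class in S other than i₀, find a pair in T
  have key : ∀ j ∈ S.erase i₀, ∃ x : (_ : V) × Fin ℓ, x ∈ T ∧
      ((f x.1 = j ∧ Q.dist i₀ x.2 < Q.dist i₀ j) ∨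
       (x.2 = j ∧ Q.dist i₀ (f x.1) < Q.dist i₀ j)) := by
    intro j hj
    obtain ⟨hne, hjS⟩ := Finset.mem_erase.mp hj
    have hr : Q.Reachable j i₀ := (hreach j hjS).symm
    obtain ⟨w, hw⟩ := hr.exists_walk_length_eq_dist
    have hdpos : 0 < Q.dist i₀ j := by
      rw [SimpleGraph.dist_comm, ← hw]
      cases w with
      | nil => exact absurd rfl hne
      | cons h w' => simp
    cases w with
    | nil => exact absurd rfl hne
    | @cons _ k _ hadj w' =>
      have hdk : Q.dist i₀ k < Q.dist i₀ j := by
        have h1 : Q.dist i₀ k ≤ w'.length := by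
          rw [SimpleGraph.dist_comm]; exact SimpleGraph.dist_le w'
        have h2 : w'.length + 1 = Q.dist i₀ j := by
          rw [SimpleGraph.dist_comm, ← hw]; simp
        omega
      obtain ⟨_, u, v, huH, hvH, huj, hvk, harc⟩ := hadj
      rcases harc with h | h
      · -- A u v : head v ∈ W k, tail u ∈ W j; pair (v, j)
        refine ⟨⟨v, j⟩, ?_, Or.inr ⟨rfl, ?_⟩⟩
        · simp only [hT, Finset.mem_sigma, Finset.mem_filter, Finset.mem_univ]
          exact ⟨hvH, True.intro, u, huj, h⟩
        · have : f v = k := (hfu _ _ hvk).symm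
          rw [this]; exact hdk
      · -- A v u : head u ∈ W j, tail v ∈ W k; pair (u, k)
        refine ⟨⟨u, k⟩, ?_, Or.inl ⟨(hfu _ _ huj).symm, hdk⟩⟩
        · simp only [hT, Finset.mem_sigma, Finset.mem_filter, Finset.mem_univ]
          exact ⟨huH, True.intro, v, hvk, h⟩
  have : Nonempty ((_ : V) × Fin ℓ) := ⟨⟨v₀, i₀⟩⟩
  choose! φ hφT hφP using key
  have hinj : Set.InjOn φ ((S.erase i₀ : Finset (Fin ℓ)) : Set (Fin ℓ)) := by
    intro j hj j' hj' heq
    by_contra hne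
    rcases hφP j hj with ⟨h1, h2⟩ | ⟨h1, h2⟩ <;>
      rcases hφP j' hj' with ⟨h1', h2'⟩ | ⟨h1', h2'⟩
    · exact hne (h1 ▸ h1' ▸ (by rw [heq]))
    · rw [heq, h1'] at h2
      rw [← heq, h1] at h2'
      omega
    · rw [heq, h1'] at h2
      rw [← heq, h1] at h2'
      omega
    · exact hne (h1 ▸ h1' ▸ (by rw [heq]))
  have hcard : (S.erase i₀).card ≤ T.card :=
    Finset.card_le_card_of_injOn φ (fun j hj => hφT j hj) hinj
  have herase : (S.erase i₀).card = p - 1 := by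
    rw [Finset.card_erase_of_mem hi₀, hpS]
  rw [hsum]
  have : p - 1 ≤ T.card := herase ▸ hcard
  omega
end

section
/- Let G be a finite graph, S ⊆ V(G) with |S| = ℓ, and W an ℓ-partition of V(G) such that each class of W contains exactly one vertex of S. Fix an orientation of the edges crossing between classes of W and define d̂(v) accordingly. Then for every connected subgraph H of G, |S ∩ V(H)| − Σ_{v ∈ V(H)} d̂(v) ≤ 1. Consequently, the generalized connectivity inequality Σ_{u ∈ S}(1 − d̂(u)) x_{u,c} − Σ_{v ∉ S} d̂(v) x_{v,c} ≤ 1 is valid for the incidence vector of any connected k-subpartition of G and any class c. -/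
open scoped Classical

variable {V : Type*}

/-- A connected `k`-subpartition of `G`: `k` pairwise disjoint vertex sets,
each either empty or inducing a connected subgraph. -/
def ConnKSub (G : SimpleGraph V) (k : ℕ) (P : Fin k → Set V) : Prop :=
  (∀ i j, i ≠ j → Disjoint (P i) (P j)) ∧
    ∀ i, P i = ∅ ∨ (G.induce (P i)).Connected

theorem stmt3 [Fintype V] [DecidableEq V] (G : SimpleGraph V) (ℓ : ℕ)
    (W : Fin ℓ → Set V) (hpart : ∀ v : V, ∃! i, v ∈ W i)
    (S : Finset V) (hScard : S.card = ℓ)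
    (hagree : ∀ i, ∃! s : V, s ∈ S ∧ s ∈ W i)
    (A : V → V → Prop)
    (horient : ∀ u v : V,
      (A u v ∨ A v u) ↔ (G.Adj u v ∧ ∀ i, ¬ (u ∈ W i ∧ v ∈ W i)))
    (hasym : ∀ u v, A u v → ¬ A v u)
    (dhat : V → ℕ)
    (hdhat : ∀ v, dhat v = Nat.card {i : Fin ℓ // ∃ u ∈ W i, A u v}) :
    (∀ H : Finset V, (G.induce (↑H : Set V)).Connected →
        ((S ∩ H).card : ℤ) - ∑ v ∈ H, (dhat v : ℤ) ≤ 1) ∧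
      ∀ (k : ℕ) (c : Fin k) (P : Fin k → Set V), ConnKSub G k P →
        (∑ u ∈ S, ((1 : ℝ) - (dhat u : ℝ)) * (if u ∈ P c then 1 else 0)) -
            ∑ v ∈ Sᶜ, (dhat v : ℝ) * (if v ∈ P c then 1 else 0) ≤ 1 := by
  classical
  -- the class index of a vertex
  set idx : V → Fin ℓ := fun v => (hpart v).choose with hidx
  have hmem : ∀ v : V, v ∈ W (idx v) := fun v => (hpart v).choose_spec.1
  have huniq : ∀ (v : V) (i : Fin ℓ), v ∈ W i → i = idx v := fun v i h =>
    (hpart v).choose_spec.2 i h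
  -- the finset of classes sending an arc into `v`
  set D : V → Finset (Fin ℓ) := fun v => Finset.univ.filter (fun i => ∃ u ∈ W i, A u v)
    with hDdef
  have hD : ∀ v, dhat v = (D v).card := by
    intro v
    rw [hdhat v, Nat.card_eq_fintype_card, Fintype.card_subtype]
  -- key combinatorial lemma (part 1)
  have key : ∀ H : Finset V, (G.induce (↑H : Set V)).Connected →
      ((S ∩ H).card : ℤ) - ∑ v ∈ H, (dhat v : ℤ) ≤ 1 := by
    intro H hH
    -- quotient graph on class indices
    set Q : SimpleGraph (Fin ℓ) :=
      { Adj := fun i j => i ≠ j ∧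
          ((∃ u ∈ H, u ∈ W i ∧ ∃ v ∈ H, v ∈ W j ∧ G.Adj u v) ∨
           (∃ u ∈ H, u ∈ W j ∧ ∃ v ∈ H, v ∈ W i ∧ G.Adj u v))
        symm := by
          constructor
          rintro i j ⟨hne, h⟩
          exact ⟨hne.symm, h.symm⟩
        loopless := by constructor; rintro i ⟨hne, -⟩; exact hne rfl } with hQdef
    -- the classes touched by H
    set J : Finset (Fin ℓ) := H.image idx with hJdef
    obtain ⟨⟨v₀, hv₀⟩⟩ := hH.nonempty
    have hv₀H : v₀ ∈ H := by exact_mod_cast hv₀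
    set r : Fin ℓ := idx v₀ with hr
    -- reachability in Q between classes of vertices of H
    have hwalk : ∀ (a b : (↑H : Set V)) (p : (G.induce (↑H : Set V)).Walk a b),
        Q.Reachable (idx a.val) (idx b.val) := by
      intro a b p
      induction p with
      | nil => exact SimpleGraph.Reachable.refl _
      | @cons x y z h p ih =>
        refine SimpleGraph.Reachable.trans ?_ ih
        have hadj : G.Adj x.val y.val := h
        by_cases he : idx x.val = idx y.val
        · rw [he]
        · have hxH : x.val ∈ H := by exact_mod_cast x.2
          have hyH : y.val ∈ H := by exact_mod_cast y.2
          exact SimpleGraph.Adj.reachable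
            ⟨he, Or.inl ⟨x.val, hxH, hmem _, y.val, hyH, hmem _, hadj⟩⟩
    have hreach : ∀ v ∈ H, Q.Reachable r (idx v) := by
      intro v hv
      have := hH.preconnected ⟨v₀, hv₀⟩ ⟨v, by exact_mod_cast hv⟩
      obtain ⟨p⟩ := this
      exact hwalk _ _ p
    -- predecessor selection along shortest paths
    have hsel : ∀ j : Fin ℓ, ∃ i : Fin ℓ, j ∈ J.erase r →
        Q.Adj i j ∧ Q.dist r i < Q.dist r j := by
      intro j
      by_cases hj : j ∈ J.erase r
      · obtain ⟨hjr, hjJ⟩ := Finset.mem_erase.mp hj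
        obtain ⟨v, hvH, hvj⟩ := Finset.mem_image.mp hjJ
        have hre : Q.Reachable r j := hvj ▸ hreach v hvH
        have hpos : 0 < Q.dist r j := hre.pos_dist_of_ne (Ne.symm hjr)
        obtain ⟨p, hp⟩ := hre.exists_walk_length_eq_dist
        -- look at the last edge of p, i.e. first edge of p.reverse
        cases hq : p.reverse with
        | nil =>
          exfalso
          have : p.length = 0 := by
            have := congrArg SimpleGraph.Walk.length hq
            simpa using this
          omega
        | @cons _ i _ h q =>
          refine ⟨i, fun _ => ⟨h.symm, ?_⟩⟩
          have hlen : q.length + 1 = Q.dist r j := by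
            have := congrArg SimpleGraph.Walk.length hq
            simp only [SimpleGraph.Walk.length_reverse, SimpleGraph.Walk.length_cons] at this
            omega
          have hle : Q.dist r i ≤ q.length := by
            have := Q.dist_le q.reverse
            simpa using this
          omega
      · exact ⟨j, fun h => absurd h hj⟩
    choose pred hpred using hsel
    -- from each Q-edge, extract an arc contributing to some dhat
    have harc : ∀ i j : Fin ℓ, Q.Adj i j → ∃ h a : V × Fin ℓ → Unit, True := fun _ _ _ =>
      ⟨fun _ => (), fun _ => (), trivial⟩
    have harc2 : ∀ j : Fin ℓ, ∃ (h : V) (a : Fin ℓ), j ∈ J.erase r →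
        (h ∈ H ∧ (∃ u ∈ W a, A u h) ∧
          ((idx h = j ∧ a = pred j) ∨ (idx h = pred j ∧ a = j))) := by
      intro j
      by_cases hj : j ∈ J.erase r
      · obtain ⟨hadj, -⟩ := hpred j hj
        obtain ⟨hne, hcr⟩ := hadj
        -- unify the two symmetric cases
        have : ∃ (u v : V) (x y : Fin ℓ), u ∈ H ∧ u ∈ W x ∧ v ∈ H ∧ v ∈ W y ∧
            G.Adj u v ∧ ((x = pred j ∧ y = j) ∨ (x = j ∧ y = pred j)) := by
          rcases hcr with ⟨u, hu, hux, v, hv, hvy, hadj'⟩ | ⟨u, hu, hux, v, hv, hvy, hadj'⟩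
          · exact ⟨u, v, pred j, j, hu, hux, hv, hvy, hadj', Or.inl ⟨rfl, rfl⟩⟩
          · exact ⟨u, v, j, pred j, hu, hux, hv, hvy, hadj', Or.inr ⟨rfl, rfl⟩⟩
        obtain ⟨u, v, x, y, huH, hux, hvH, hvy, hadj', hxy⟩ := this
        have hxyne : x ≠ y := by
          rcases hxy with ⟨hx, hy⟩ | ⟨hx, hy⟩ <;> subst hx <;> subst hy
          · exact fun e => hne e
          · exact fun e => hne e.symm
        have hxu : x = idx u := huniq u x hux
        have hyv : y = idx v := huniq v y hvy
        have hcross : ∀ i, ¬ (u ∈ W i ∧ v ∈ W i) := by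
          rintro i ⟨hui, hvi⟩
          exact hxyne ((huniq u i hui ▸ hxu.symm).symm.trans (huniq v i hvi ▸ hyv.symm))
        have hAor : A u v ∨ A v u := (horient u v).mpr ⟨hadj', hcross⟩
        rcases hAor with hA | hA
        · -- arc into v ∈ W y; tail class x
          refine ⟨v, x, fun _ => ⟨hvH, ⟨u, hux, hA⟩, ?_⟩⟩
          rcases hxy with ⟨hx, hy⟩ | ⟨hx, hy⟩
          · exact Or.inl ⟨by rw [← hyv, hy], hx⟩
          · exact Or.inr ⟨by rw [← hyv, hy], hx⟩
        · -- arc into u ∈ W x; tail class y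
          refine ⟨u, y, fun _ => ⟨huH, ⟨v, hvy, hA⟩, ?_⟩⟩
          rcases hxy with ⟨hx, hy⟩ | ⟨hx, hy⟩
          · exact Or.inr ⟨by rw [← hxu, hx], hy⟩
          · exact Or.inl ⟨by rw [← hxu, hx], hy⟩
      · exact ⟨v₀, r, fun h => absurd h hj⟩
    choose hd ac hspec using harc2
    -- injection from J.erase r into the sigma set
    have hinj : (J.erase r).card ≤ (H.sigma fun v => D v).card := by
      refine Finset.card_le_card_of_injOn (fun j => ⟨hd j, ac j⟩) ?_ ?_
      · intro j hj
        obtain ⟨h1, h2, -⟩ := hspec j hj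
        rw [Finset.mem_coe, Finset.mem_sigma]
        exact ⟨h1, by simpa [hDdef] using h2⟩
      · intro j hj j' hj' heq
        obtain ⟨-, -, hc⟩ := hspec j hj
        obtain ⟨-, -, hc'⟩ := hspec j' hj'
        have h1 : hd j = hd j' := congrArg Sigma.fst heq
        have h2 : ac j = ac j' := by
          have := congrArg Sigma.snd heq
          simpa using this
        obtain ⟨-, hlt⟩ := hpred j hj
        obtain ⟨-, hlt'⟩ := hpred j' hj'
        rcases hc with ⟨hi1, hi2⟩ | ⟨hi1, hi2⟩ <;>
          rcases hc' with ⟨hi1', hi2'⟩ | ⟨hi1', hi2'⟩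
        · rw [← hi1, ← hi1', h1]
        · -- idx (hd j) = j, ac j = pred j ; idx (hd j') = pred j', ac j' = j'
          exfalso
          have e1 : j = pred j' := by rw [← hi1, h1, hi1']
          have e2 : pred j = j' := by rw [← hi2, h2, hi2']
          rw [e2] at hlt
          rw [← e1] at hlt'
          exact (lt_asymm hlt) hlt'
        · exfalso
          have e1 : pred j = j' := by rw [← hi1, h1, hi1']
          have e2 : j = pred j' := by rw [← hi2, h2, hi2']
          rw [e1] at hlt
          rw [← e2] at hlt'
          exact (lt_asymm hlt) hlt'
        · rw [← hi2, ← hi2', h2]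
    -- |S ∩ H| ≤ |J|
    have hSJ : (S ∩ H).card ≤ J.card := by
      refine Finset.card_le_card_of_injOn idx ?_ ?_
      · intro s hs
        exact Finset.mem_image.mpr ⟨s, (Finset.mem_inter.mp hs).2, rfl⟩
      · intro s hs s' hs' he
        have hsS := (Finset.mem_inter.mp hs).1
        have hs'S := (Finset.mem_inter.mp hs').1
        obtain ⟨t, -, ht⟩ := hagree (idx s)
        have e1 : s = t := ht s ⟨hsS, hmem s⟩
        have e2 : s' = t := ht s' ⟨hs'S, he ▸ hmem s'⟩
        rw [e1, e2]
    have hrJ : r ∈ J := Finset.mem_image.mpr ⟨v₀, hv₀H, rfl⟩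
    have hJcard : J.card ≤ (J.erase r).card + 1 := by
      rw [Finset.card_erase_of_mem hrJ]
      omega
    have hsum : ∑ v ∈ H, dhat v = (H.sigma fun v => D v).card := by
      rw [Finset.card_sigma]
      exact Finset.sum_congr rfl fun v _ => hD v
    have hfinal : (S ∩ H).card ≤ (∑ v ∈ H, dhat v) + 1 := by
      calc (S ∩ H).card ≤ J.card := hSJ
        _ ≤ (J.erase r).card + 1 := hJcard
        _ ≤ (H.sigma fun v => D v).card + 1 := by omega
        _ = (∑ v ∈ H, dhat v) + 1 := by rw [hsum]
    have : ((S ∩ H).card : ℤ) ≤ (∑ v ∈ H, (dhat v : ℤ)) + 1 := by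
      push_cast
      exact_mod_cast hfinal
    omega
  refine ⟨key, ?_⟩
  intro k c P hP
  obtain ⟨-, hconn⟩ := hP
  rcases hconn c with hemp | hcon
  · simp [hemp]
  · set H : Finset V := (P c).toFinset with hHdef
    have hHP : (↑H : Set V) = P c := Set.coe_toFinset _
    have hHconn : (G.induce (↑H : Set V)).Connected := by rw [hHP]; exact hcon
    have hkey := key H hHconn
    have hmemH : ∀ v : V, v ∈ P c ↔ v ∈ H := fun v => (Set.mem_toFinset).symm
    -- rewrite both sums as sums over intersections with H
    have e1 : (∑ u ∈ S, ((1 : ℝ) - (dhat u : ℝ)) * (if u ∈ P c then 1 else 0))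
        = ∑ u ∈ S ∩ H, ((1 : ℝ) - (dhat u : ℝ)) := by
      simp only [mul_ite, mul_one, mul_zero]
      rw [← Finset.sum_filter]
      congr 1
      ext u
      simp [Finset.mem_filter, Finset.mem_inter, hmemH]
    have e2 : (∑ v ∈ Sᶜ, (dhat v : ℝ) * (if v ∈ P c then 1 else 0))
        = ∑ v ∈ Sᶜ ∩ H, (dhat v : ℝ) := by
      simp only [mul_ite, mul_one, mul_zero]
      rw [← Finset.sum_filter]
      congr 1
      ext u
      simp [Finset.mem_filter, Finset.mem_inter, hmemH]
    rw [e1, e2]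
    have hsplit : H = (S ∩ H) ∪ (Sᶜ ∩ H) := by
      ext v
      by_cases hv : v ∈ S <;> simp [Finset.mem_union, Finset.mem_inter, hv]
    have hdisj2 : Disjoint (S ∩ H) (Sᶜ ∩ H) := by
      refine Finset.disjoint_left.mpr ?_
      intro a ha ha'
      have h1 := (Finset.mem_inter.mp ha).1
      have h2 := (Finset.mem_inter.mp ha').1
      simp at h2
      exact h2 h1
    have hsumH : ∑ v ∈ H, (dhat v : ℝ)
        = ∑ v ∈ S ∩ H, (dhat v : ℝ) + ∑ v ∈ Sᶜ ∩ H, (dhat v : ℝ) := by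
      conv_lhs => rw [hsplit]
      exact Finset.sum_union hdisj2
    have e3 : ∑ u ∈ S ∩ H, ((1 : ℝ) - (dhat u : ℝ))
        = ((S ∩ H).card : ℝ) - ∑ u ∈ S ∩ H, (dhat u : ℝ) := by
      rw [Finset.sum_sub_distrib, Finset.sum_const, nsmul_eq_mul, mul_one]
    rw [e3]
    have hkeyR : ((S ∩ H).card : ℝ) - ∑ v ∈ H, (dhat v : ℝ) ≤ 1 := by
      have : ((S ∩ H).card : ℝ) - ((∑ v ∈ H, (dhat v : ℤ) : ℤ) : ℝ) ≤ 1 := by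
        exact_mod_cast hkey
      push_cast at this ⊢
      linarith
    rw [hsumH] at hkeyR
    linarith
end

section
/- Let G be a graph, u and v non-adjacent distinct vertices, Z a minimal u,v-separator, and let U be the vertex set of the component of G − Z containing u. Consider the 2-partition W = {U, V(G) \ U} of V(G) and orient every crossing edge from U to its other endpoint. Then for every vertex w, d̂(w) = 1 if w ∈ Z and d̂(w) = 0 otherwise; hence the generalized connectivity inequality for S = {u,v} coincides with the connectivity inequality x_{u,c} + x_{v,c} − Σ_{z ∈ Z} x_{z,c} ≤ 1. -/
open scoped Classical

variable {V : Type*}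

lemma induce_reach_iff (G : SimpleGraph V) (s : Set V) (a b : V) (ha : a ∈ s) (hb : b ∈ s) :
    (G.induce s).Reachable ⟨a, ha⟩ ⟨b, hb⟩ ↔
      ∃ p : G.Walk a b, ∀ x ∈ p.support, x ∈ s := by
  constructor
  · rintro ⟨q⟩
    refine ⟨q.map (SimpleGraph.Embedding.induce s).toHom, ?_⟩
    intro x hx
    have hx' : x ∈ (q.map (SimpleGraph.Embedding.induce s).toHom).support := hx
    rw [SimpleGraph.Walk.support_map] at hx'
    obtain ⟨y, _, rfl⟩ := List.mem_map.mp hx'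
    exact y.2
  · rintro ⟨p, hp⟩
    induction p with
    | nil => exact SimpleGraph.Reachable.refl _
    | @cons a c d h p ih =>
      have hc : c ∈ s := hp c (by simp)
      have : (G.induce s).Adj ⟨a, ha⟩ ⟨c, hc⟩ := h
      exact (this.reachable).trans (ih hc hb (fun x hx => hp x (by simp [hx])))

/-- `Z` is a `u,v`-separator in `G`. -/
def IsSep (G : SimpleGraph V) (u v : V) (Z : Set V) : Prop :=
  Z ⊆ ({u, v} : Set V)ᶜ ∧
    ∀ (hu : u ∈ Zᶜ) (hv : v ∈ Zᶜ),
      ¬ (G.induce Zᶜ).Reachable ⟨u, hu⟩ ⟨v, hv⟩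

theorem stmt4 [Fintype V] [DecidableEq V] (G : SimpleGraph V) (u v : V)
    (hne : u ≠ v) (hadj : ¬ G.Adj u v) (Z : Finset V)
    (hsep : IsSep G u v (↑Z : Set V))
    (hmin : ∀ Z' ⊆ Z, Z' ≠ Z → ¬ IsSep G u v (↑Z' : Set V))
    (U : Set V)
    (hU : U = {w : V | ∃ (hw : w ∈ ((↑Z : Set V))ᶜ) (hu : u ∈ ((↑Z : Set V))ᶜ),
      (G.induce ((↑Z : Set V))ᶜ).Reachable ⟨u, hu⟩ ⟨w, hw⟩})
    (A : V → V → Prop) (hA : ∀ a b, A a b ↔ (G.Adj a b ∧ a ∈ U ∧ b ∉ U))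
    (dhat : V → ℕ)
    (hdhat : ∀ w, dhat w = Nat.card {i : Fin 2 // ∃ t ∈ (![U, Uᶜ] i), A t w}) :
    (∀ w : V, dhat w = if w ∈ Z then 1 else 0) ∧
      ∀ x : V → ℝ,
        ((1 : ℝ) - dhat u) * x u + ((1 : ℝ) - dhat v) * x v -
            ∑ w ∈ Finset.univ \ {u, v}, (dhat w : ℝ) * x w =
          x u + x v - ∑ z ∈ Z, x z := by
  have huZ : u ∉ Z := by
    intro h
    have := hsep.1 (by exact_mod_cast h)
    simp [Set.mem_compl_iff] at this
  have hvZ : v ∉ Z := by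
    intro h
    have := hsep.1 (by exact_mod_cast h)
    simp [Set.mem_compl_iff] at this
  have huZc : u ∈ ((↑Z : Set V))ᶜ := huZ
  have hvZc : v ∈ ((↑Z : Set V))ᶜ := hvZ
  have hUsub : U ⊆ ((↑Z : Set V))ᶜ := by
    rw [hU]; rintro w ⟨hw, -, -⟩; exact hw
  have huU : u ∈ U := by
    rw [hU]; exact ⟨huZc, huZc, SimpleGraph.Reachable.refl _⟩
  -- membership in U from a walk avoiding Z
  have memU : ∀ (w : V) (_ : w ∉ Z) (p : G.Walk u w),
      (∀ x ∈ p.support, x ∉ Z) → w ∈ U := by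
    intro w hw p hp
    rw [hU]
    refine ⟨hw, huZc, ?_⟩
    exact (induce_reach_iff G ((↑Z : Set V))ᶜ u w huZc hw).2
      ⟨p, fun x hx => hp x hx⟩
  -- the key characterization
  have key : ∀ w : V, (w ∉ U ∧ ∃ t ∈ U, G.Adj t w) ↔ w ∈ Z := by
    intro w
    constructor
    · rintro ⟨hwU, t, htU, hadj'⟩
      by_contra hwZ
      -- extend the walk from u to t by the edge t-w to get w ∈ U
      obtain ⟨hwt, hu', hr⟩ := hU ▸ htU
      obtain ⟨p, hp⟩ := (induce_reach_iff G ((↑Z : Set V))ᶜ u t huZc hwt).1 hr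
      have : w ∈ U := memU w hwZ (p.concat hadj')
        (by
          intro x hx
          rw [SimpleGraph.Walk.support_concat] at hx
          simp only [List.concat_eq_append, List.mem_append, List.mem_singleton] at hx
          rcases hx with hx | rfl
          · exact hp x hx
          · exact hwZ)
      exact hwU this
    · intro hwZ
      have hwU : w ∉ U := fun h => (hUsub h) (by exact_mod_cast hwZ)
      refine ⟨hwU, ?_⟩
      -- use minimality with Z' = Z.erase w
      have hne' : Z.erase w ≠ Z := fun h => (h ▸ Finset.notMem_erase w Z) hwZ
      have hnotsep := hmin (Z.erase w) (Finset.erase_subset w Z) hne'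
      rw [IsSep] at hnotsep
      push_neg at hnotsep
      have hsub' : (↑(Z.erase w) : Set V) ⊆ ({u, v} : Set V)ᶜ := by
        intro x hx
        exact hsep.1 (by exact_mod_cast Finset.erase_subset w Z (by exact_mod_cast hx))
      obtain ⟨hu', hv', hreach⟩ := hnotsep hsub'
      obtain ⟨p, hp⟩ := (induce_reach_iff G ((↑(Z.erase w) : Set V))ᶜ u v hu' hv').1 hreach
      -- the walk must pass through w
      have hwp : w ∈ p.support := by
        by_contra hwp
        exact hsep.2 huZc hvZc ((induce_reach_iff G ((↑Z : Set V))ᶜ u v huZc hvZc).2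
          ⟨p, by
            intro x hx
            have hx1 : x ∉ Z.erase w := hp x hx
            intro hxZ
            exact hx1 (Finset.mem_erase.2 ⟨fun h => hwp (h ▸ hx), by exact_mod_cast hxZ⟩)⟩)
      set q := p.takeUntil w hwp with hq
      have hcount : q.support.count w = 1 := p.count_support_takeUntil_eq_one hwp
      have hqnil : ¬ q.reverse.Nil :=
        SimpleGraph.Walk.not_nil_of_ne (by intro h; subst h; exact huZ hwZ)
      obtain ⟨t, h, r, hqr⟩ := SimpleGraph.Walk.not_nil_iff.1 hqnil
      -- w does not appear in r.support
      have hwr : w ∉ r.support := by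
        have h1 : q.reverse.support.count w = 1 := by
          rw [SimpleGraph.Walk.support_reverse, List.count_reverse, hcount]
        rw [hqr, SimpleGraph.Walk.support_cons, List.count_cons_self] at h1
        exact List.count_eq_zero.1 (by omega)
      have hrsub : ∀ x ∈ r.support, x ∉ Z := by
        intro x hx hxZ
        have hx' : x ∈ q.support := by
          have : x ∈ q.reverse.support := by rw [hqr, SimpleGraph.Walk.support_cons]; simp [hx]
          rwa [SimpleGraph.Walk.support_reverse, List.mem_reverse] at this
        have : x ∉ Z.erase w := hp x (p.support_takeUntil_subset hwp hx')
        exact this (Finset.mem_erase.2 ⟨fun hxw => hwr (hxw ▸ hx), hxZ⟩)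
      have htZ : t ∉ Z := hrsub t (SimpleGraph.Walk.start_mem_support r)
      have htU : t ∈ U := memU t htZ r.reverse
        (by intro x hx; rw [SimpleGraph.Walk.support_reverse, List.mem_reverse] at hx
            exact hrsub x hx)
      exact ⟨t, htU, h.symm⟩
  -- compute dhat
  have hdhat' : ∀ w : V, dhat w = if w ∈ Z then 1 else 0 := by
    intro w
    rw [hdhat w]
    by_cases hwZ : w ∈ Z
    · rw [if_pos hwZ]
      rw [Nat.card_eq_one_iff_unique]
      have hcond := (key w).2 hwZ
      obtain ⟨hwU, t, htU, htadj⟩ := hcond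
      constructor
      · constructor
        intro ⟨i, hi⟩ ⟨j, hj⟩
        have hval : ∀ k : Fin 2, (∃ t ∈ (![U, Uᶜ] k), A t w) → k = 0 := by
          intro k hk
          fin_cases k
          · rfl
          · obtain ⟨s, hs, hAs⟩ := hk
            exact absurd ((hA s w).1 hAs).2.1 hs
        simp only [Subtype.mk.injEq]
        rw [hval i hi, hval j hj]
      · exact ⟨⟨0, ⟨t, htU, (hA t w).2 ⟨htadj, htU, hwU⟩⟩⟩⟩
    · rw [if_neg hwZ]
      rw [Nat.card_eq_zero]
      left
      constructor
      rintro ⟨i, t, ht, hAt⟩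
      obtain ⟨htadj, htU, hwU⟩ := (hA t w).1 hAt
      exact hwZ ((key w).1 ⟨hwU, t, htU, htadj⟩)
  refine ⟨hdhat', ?_⟩
  intro x
  have hu0 : dhat u = 0 := by rw [hdhat' u, if_neg huZ]
  have hv0 : dhat v = 0 := by rw [hdhat' v, if_neg hvZ]
  rw [hu0, hv0]
  have hsum : ∑ w ∈ Finset.univ \ {u, v}, (dhat w : ℝ) * x w = ∑ z ∈ Z, x z := by
    have : ∀ w ∈ Finset.univ \ ({u, v} : Finset V),
        (dhat w : ℝ) * x w = if w ∈ Z then x w else 0 := by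
      intro w _
      rw [hdhat' w]
      by_cases hwZ : w ∈ Z <;> simp [hwZ]
    rw [Finset.sum_congr rfl this, ← Finset.sum_filter]
    congr 1
    ext w
    simp only [Finset.mem_filter, Finset.mem_sdiff, Finset.mem_univ, true_and,
      Finset.mem_insert, Finset.mem_singleton]
    constructor
    · rintro ⟨-, h⟩; exact h
    · intro h
      refine ⟨?_, h⟩
      rintro (rfl | rfl) <;> [exact huZ h; exact hvZ h]
  rw [hsum]
  push_cast
  ring
end

section
/- Let G be a graph with n vertices, let k ≥ 1, let C ⊆ [k] be nonempty, let S ⊆ V(G) be a stable set, let Z ⊆ V(G) \ S be a multiway cut of S in G, and set β = max(|S| − |C|, 0). Then for every connected k-subpartition {V_1,…,V_k} of G, Σ_{c ∈ C} |V_c ∩ S| − β · Σ_{c ∈ C} |V_c ∩ Z| ≤ |C|. -/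
variable {V : Type*}

/-- `S` is a stable (independent) set of `G`. -/
def IsStable (G : SimpleGraph V) (S : Set V) : Prop :=
  ∀ u ∈ S, ∀ v ∈ S, ¬ G.Adj u v

/-- `Z` is a multiway cut of `S` in `G`: `Z` avoids `S` and each component of
`G − Z` contains at most one vertex of `S`. -/
def IsMultiwayCut (G : SimpleGraph V) (S Z : Set V) : Prop :=
  Z ⊆ Sᶜ ∧
    ∀ u ∈ S, ∀ v ∈ S, u ≠ v →
      ∀ (hu : u ∈ Zᶜ) (hv : v ∈ Zᶜ),
        ¬ (G.induce Zᶜ).Reachable ⟨u, hu⟩ ⟨v, hv⟩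

theorem stmt5 [Fintype V] (G : SimpleGraph V) (k : ℕ) (hk : 1 ≤ k)
    (C : Finset (Fin k)) (hC : C.Nonempty) (S Z : Set V)
    (hS : IsStable G S) (hZ : IsMultiwayCut G S Z)
    (β : ℤ) (hβ : β = max ((S.ncard : ℤ) - (C.card : ℤ)) 0)
    (P : Fin k → Set V) (hP : ConnKSub G k P) :
    (∑ c ∈ C, ((P c ∩ S).ncard : ℤ)) - β * ∑ c ∈ C, ((P c ∩ Z).ncard : ℤ) ≤
      (C.card : ℤ) := by
  classical
  have hβ0 : 0 ≤ β := hβ ▸ le_max_right _ _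
  have hZsum0 : (0:ℤ) ≤ ∑ c ∈ C, ((P c ∩ Z).ncard : ℤ) :=
    Finset.sum_nonneg fun c _ => Int.natCast_nonneg _
  -- key: parts avoiding Z contain at most one vertex of S
  have hone : ∀ i, P i ∩ Z = ∅ → (P i ∩ S).ncard ≤ 1 := by
    intro i hiz
    have hsub : P i ⊆ Zᶜ := fun v hv hvz =>
      (Set.eq_empty_iff_forall_notMem.mp hiz v) ⟨hv, hvz⟩
    rw [Set.ncard_le_one_iff_eq]
    by_contra h
    push_neg at h
    obtain ⟨hne, h2⟩ := h
    obtain ⟨u, hu⟩ := hne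
    have : ∃ v ∈ P i ∩ S, v ≠ u := by
      by_contra hv
      push_neg at hv
      exact h2 u (Set.eq_singleton_iff_unique_mem.mpr ⟨hu, hv⟩)
    obtain ⟨v, hv, hvu⟩ := this
    have hconn : (G.induce (P i)).Connected := by
      rcases hP.2 i with he | hc
      · exact absurd (he ▸ hu.1) (Set.notMem_empty u)
      · exact hc
    have hr : (G.induce (P i)).Reachable ⟨u, hu.1⟩ ⟨v, hv.1⟩ :=
      hconn.preconnected _ _
    have hr2 : (G.induce Zᶜ).Reachable ⟨u, hsub hu.1⟩ ⟨v, hsub hv.1⟩ :=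
      hr.map (⟨fun x => ⟨x.1, hsub x.2⟩, fun {a b} h => h⟩ : G.induce (P i) →g G.induce Zᶜ)
    exact hZ.2 u hu.2 v hv.2 (Ne.symm hvu) (hsub hu.1) (hsub hv.1) hr2
  -- sum of |P c ∩ S| is at most |S|
  have hsumS : ∑ c ∈ C, (P c ∩ S).ncard ≤ S.ncard := by
    have hdisj : ∀ c ∈ C, ∀ d ∈ C, c ≠ d →
        Disjoint (P c ∩ S).toFinset (P d ∩ S).toFinset := by
      intro c _ d _ hcd
      rw [Set.disjoint_toFinset]
      exact ((hP.1 c d hcd).mono (Set.inter_subset_left) (Set.inter_subset_left))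
    calc ∑ c ∈ C, (P c ∩ S).ncard
        = ∑ c ∈ C, (P c ∩ S).toFinset.card := by
          simp [Set.ncard_eq_toFinset_card']
      _ = (C.biUnion fun c => (P c ∩ S).toFinset).card :=
          (Finset.card_biUnion hdisj).symm
      _ ≤ S.toFinset.card := by
          apply Finset.card_le_card
          intro v hv
          simp only [Finset.mem_biUnion, Set.mem_toFinset] at hv ⊢
          obtain ⟨c, _, hc⟩ := hv
          exact hc.2
      _ = S.ncard := (Set.ncard_eq_toFinset_card' S).symm
  rcases le_or_gt (S.ncard : ℤ) (C.card : ℤ) with hle | hgt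
  · have : (∑ c ∈ C, ((P c ∩ S).ncard : ℤ)) ≤ (S.ncard : ℤ) := by
      exact_mod_cast hsumS
    nlinarith [mul_nonneg hβ0 hZsum0]
  · have hβval : β = (S.ncard : ℤ) - (C.card : ℤ) := by
      rw [hβ, max_eq_left (by linarith)]
    by_cases hall : ∀ c ∈ C, P c ∩ Z = ∅
    · have h1 : ∑ c ∈ C, (P c ∩ S).ncard ≤ C.card := by
        calc ∑ c ∈ C, (P c ∩ S).ncard ≤ ∑ c ∈ C, 1 :=
          Finset.sum_le_sum fun c hc => hone c (hall c hc)
        _ = C.card := by simp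
      have h2 : ∑ c ∈ C, ((P c ∩ Z).ncard : ℤ) = 0 := by
        apply Finset.sum_eq_zero
        intro c hc
        simp [hall c hc]
      rw [h2]
      have : (∑ c ∈ C, ((P c ∩ S).ncard : ℤ)) ≤ (C.card : ℤ) := by
        exact_mod_cast (by simpa using h1 : ∑ c ∈ C, (P c ∩ S).ncard ≤ C.card)
      linarith
    · push_neg at hall
      obtain ⟨c₀, hc₀, hc₀ne⟩ := hall
      have hz1 : (1:ℤ) ≤ ∑ c ∈ C, ((P c ∩ Z).ncard : ℤ) := by
        have h1 : 1 ≤ (P c₀ ∩ Z).ncard :=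
          (Set.ncard_pos (Set.toFinite _)).mpr hc₀ne
        calc (1:ℤ) ≤ ((P c₀ ∩ Z).ncard : ℤ) := by exact_mod_cast h1
          _ ≤ ∑ c ∈ C, ((P c ∩ Z).ncard : ℤ) :=
            Finset.single_le_sum (fun c _ => Int.natCast_nonneg _) hc₀
      have h1 : (∑ c ∈ C, ((P c ∩ S).ncard : ℤ)) ≤ (S.ncard : ℤ) := by
        exact_mod_cast hsumS
      nlinarith
end

section
/- Let G be a graph, k ≥ 1, and let x ∈ {0,1}^{nk}. Then x is the incidence vector of a connected k-subpartition of G if and only if x satisfies: (i) Σ_{c∈[k]} x_{v,c} ≤ 1 for all vertices v, and (ii) x_{u,c} + x_{v,c} − Σ_{z∈Z} x_{z,c} ≤ 1 for all non-adjacent pairs {u,v}, all minimal u,v-separators Z, and all classes c. -/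
open scoped Classical

variable {V : Type*}

/-- Reachability is monotone under enlarging the induced set. -/
lemma reach_mono (G : SimpleGraph V) {S T : Set V} (hST : S ⊆ T) {u v : V}
    (hu : u ∈ S) (hv : v ∈ S)
    (h : (G.induce S).Reachable ⟨u, hu⟩ ⟨v, hv⟩) :
    (G.induce T).Reachable ⟨u, hST hu⟩ ⟨v, hST hv⟩ := by
  let f : G.induce S →g G.induce T :=
    ⟨fun a => ⟨a.1, hST a.2⟩, fun {a b} hab => hab⟩
  exact h.map f

/-- Every finite separator contains a minimal one. -/
lemma exists_min_sep [Fintype V] [DecidableEq V] (G : SimpleGraph V) (u v : V)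
    (Z : Finset V) (h : IsSep G u v (↑Z : Set V)) :
    ∃ W ⊆ Z, IsSep G u v (↑W : Set V) ∧
      ∀ W' ⊆ W, W' ≠ W → ¬ IsSep G u v (↑W' : Set V) := by
  induction Z using Finset.strongInduction with
  | _ Z ih =>
    by_cases hmin : ∀ W' ⊆ Z, W' ≠ Z → ¬ IsSep G u v (↑W' : Set V)
    · exact ⟨Z, le_refl _, h, hmin⟩
    · push_neg at hmin
      obtain ⟨W', hW'sub, hW'ne, hW'sep⟩ := hmin
      obtain ⟨W, hWsub, hWsep, hWmin⟩ := ih W' (lt_of_le_of_ne hW'sub hW'ne) hW'sep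
      exact ⟨W, hWsub.trans hW'sub, hWsep, hWmin⟩

theorem stmt13 [Fintype V] [DecidableEq V] (G : SimpleGraph V) (k : ℕ)
    (x : V → Fin k → ℝ) (h01 : ∀ v c, x v c = 0 ∨ x v c = 1) :
    (∃ P : Fin k → Set V, ConnKSub G k P ∧
        x = fun v c => if v ∈ P c then 1 else 0) ↔
      ((∀ v : V, ∑ c : Fin k, x v c ≤ 1) ∧
        ∀ u v : V, u ≠ v → ¬ G.Adj u v → ∀ Z : Finset V,
          (IsSep G u v (↑Z : Set V) ∧
            ∀ Z' ⊆ Z, Z' ≠ Z → ¬ IsSep G u v (↑Z' : Set V)) →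
          ∀ c : Fin k, x u c + x v c - ∑ z ∈ Z, x z c ≤ 1) := by
  constructor
  · rintro ⟨P, ⟨hdisj, hconn⟩, rfl⟩
    constructor
    · intro v
      simp only [Finset.sum_boole]
      rw [Nat.cast_le_one]
      apply Finset.card_le_one.2
      intro a ha b hb
      simp only [Finset.mem_filter] at ha hb
      by_contra hab
      exact (hdisj a b hab).ne_of_mem ha.2 hb.2 rfl
    · intro u v huv hadj Z ⟨hsep, _⟩ c
      by_cases hu : u ∈ P c
      · by_cases hv : v ∈ P c
        · -- P c is connected, contains u, v; Z must meet P c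
          have hPc : (G.induce (P c)).Connected := by
            rcases hconn c with h | h
            · exact absurd (h ▸ hu) (Set.notMem_empty u)
            · exact h
          have hreach : (G.induce (P c)).Reachable ⟨u, hu⟩ ⟨v, hv⟩ := hPc.preconnected _ _
          have hmeet : ∃ z ∈ Z, z ∈ P c := by
            by_contra hne
            push_neg at hne
            have hsub : P c ⊆ (↑Z : Set V)ᶜ := fun w hw hwZ => hne w hwZ hw
            have huZ : u ∈ (↑Z : Set V)ᶜ := hsub hu
            have hvZ : v ∈ (↑Z : Set V)ᶜ := hsub hv
            exact hsep.2 huZ hvZ (reach_mono G hsub hu hv hreach)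
          obtain ⟨z, hzZ, hzP⟩ := hmeet
          have h1 : (1 : ℝ) ≤ ∑ z ∈ Z, (if z ∈ P c then (1:ℝ) else 0) := by
            have := Finset.single_le_sum (f := fun z => if z ∈ P c then (1:ℝ) else 0)
              (fun i _ => by positivity) hzZ
            simpa [hzP] using this
          simp only [if_pos hu, if_pos hv]
          linarith
        · have hs : (0:ℝ) ≤ ∑ z ∈ Z, (if z ∈ P c then (1:ℝ) else 0) :=
            Finset.sum_nonneg fun i _ => by positivity
          simp only [if_pos hu, if_neg hv]
          linarith
      · have hs : (0:ℝ) ≤ ∑ z ∈ Z, (if z ∈ P c then (1:ℝ) else 0) :=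
          Finset.sum_nonneg fun i _ => by positivity
        by_cases hv : v ∈ P c <;> simp only [if_pos, if_neg, hu, hv] <;>
          simp [hu, hv] <;> linarith
  · rintro ⟨h1, h2⟩
    refine ⟨fun c => {v | x v c = 1}, ⟨?_, ?_⟩, ?_⟩
    · intro i j hij
      rw [Set.disjoint_left]
      intro v hvi hvj
      have : (2:ℝ) ≤ ∑ c : Fin k, x v c := by
        have hsub : ({i, j} : Finset (Fin k)) ⊆ Finset.univ := Finset.subset_univ _
        have := Finset.sum_le_sum_of_subset_of_nonneg (f := fun c => x v c) hsub
          (fun c _ _ => by rcases h01 v c with h|h <;> rw [h] <;> norm_num)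
        rw [Finset.sum_pair hij] at this
        simp only [Set.mem_setOf_eq] at hvi hvj
        linarith [this]
      linarith [h1 v]
    · intro c
      by_cases hP : ({v | x v c = 1} : Set V) = ∅
      · exact Or.inl hP
      · obtain ⟨w, hw⟩ := Set.nonempty_iff_ne_empty.2 hP
        have hne : Nonempty ({v | x v c = 1} : Set V) := ⟨⟨w, hw⟩⟩
        refine Or.inr ⟨?_⟩
        · -- preconnected
          rintro ⟨u, hu⟩ ⟨v, hv⟩
          by_contra hreach
          have huv : u ≠ v := by rintro rfl; exact hreach (SimpleGraph.Reachable.refl _)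
          have hadj : ¬ G.Adj u v := by
            intro h
            have hadj' : (G.induce ({v | x v c = 1} : Set V)).Adj ⟨u, hu⟩ ⟨v, hv⟩ := h
            exact hreach hadj'.reachable
          set S : Set V := {v | x v c = 1} with hS
          set Z0 : Finset V := Finset.univ.filter (fun w => w ∉ S) with hZ0
          have hZ0c : ((↑Z0 : Set V))ᶜ = S := by
            ext w; simp [hZ0]
          have hsep0 : IsSep G u v (↑Z0 : Set V) := by
            constructor
            · intro w hw
              simp only [hZ0, Finset.coe_filter, Set.mem_setOf_eq, Finset.mem_univ,
                true_and] at hw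
              simp only [Set.mem_compl_iff, Set.mem_insert_iff, Set.mem_singleton_iff]
              rintro (rfl | rfl) <;> exact hw ‹_›
            · intro hu' hv' hr
              have hu'' : u ∈ S := hZ0c ▸ hu'
              have hv'' : v ∈ S := hZ0c ▸ hv'
              exact hreach (reach_mono G (hZ0c.le) hu' hv' hr)
          obtain ⟨W, hWsub, hWsep, hWmin⟩ := exists_min_sep G u v Z0 hsep0
          have hkey := h2 u v huv hadj W ⟨hWsep, hWmin⟩ c
          have hsum : ∑ z ∈ W, x z c = 0 := by
            apply Finset.sum_eq_zero
            intro z hz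
            have hzZ0 : z ∈ Z0 := hWsub hz
            simp only [hZ0, Finset.mem_filter, Finset.mem_univ, true_and] at hzZ0
            rcases h01 z c with h|h
            · exact h
            · exact absurd h hzZ0
          simp only [Set.mem_setOf_eq] at hu hv
          rw [hsum, hu, hv] at hkey
          linarith
    · funext v c
      simp only [Set.mem_setOf_eq]
      rcases h01 v c with h|h <;> simp [h]
end

section
/- Let G be a graph, C, {u_c,v_c}_{c∈C}, Z, pivots and γ as in the definition of the pairing inequality, and let {V_i}_{i∈[k]} be a conforming connected k-subpartition of G with respect to these data. Then the incidence vector of {V_i} satisfies the pairing inequality Σ_{c∈C} ( [u_c ∈ V_c] + [v_c ∈ V_c] − Σ_{z∈Z} γ_{z,c}·[z ∈ V_c] ) = |C| with equality. -/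
open scoped Classical

variable {V : Type*}

theorem stmt15 [Fintype V] [DecidableEq V] (G : SimpleGraph V) (k : ℕ)
    (C : Finset (Fin k)) (uu vv : Fin k → V)
    (hdel : ∀ c ∈ C, uu c ≠ vv c ∧ ¬ G.Adj (uu c) (vv c))
    (Z : Finset V) (hZdel : ∀ c ∈ C, uu c ∉ Z ∧ vv c ∉ Z)
    (hZsep : ∀ c ∈ C, IsSep G (uu c) (vv c) (↑Z : Set V))
    (pivot : (c : Fin k) → G.Walk (uu c) (vv c) → V)
    (hpivot : ∀ c ∈ C, ∀ p : G.Walk (uu c) (vv c), p.IsPath →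
      pivot c p ∈ p.support ∧ pivot c p ∈ Z)
    (γ : V → Fin k → ℕ)
    (hγ : ∀ z ∈ Z, ∀ c ∈ C, γ z c =
      if ((∃ b ∈ C, b ≠ c ∧
            ∀ p : G.Walk (uu c) (vv c), p.IsPath → pivot c p = z →
              uu b ∈ p.support ∧ vv b ∈ p.support) ∨
          ¬ ∃ p : G.Walk (uu c) (vv c), p.IsPath ∧ pivot c p = z)
      then 0 else 1)
    (P : Fin k → Set V) (hP : ConnKSub G k P)
    -- `P` is conforming with respect to these data:
    (hconf : ∀ c ∈ C,
      ((P c ∩ {uu c, vv c}).ncard = 0 ∧ (∀ z ∈ Z, z ∈ P c → γ z c = 0) ∧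
          ∃ b ∈ C, b ≠ c ∧ ({uu c, vv c, uu b, vv b} : Set V) ⊆ P b) ∨
        ((P c ∩ {uu c, vv c}).ncard = 1 ∧ (∀ z ∈ Z, z ∈ P c → γ z c = 0) ∧
          ∀ b ∈ C, b ≠ c → ¬ (({uu b, vv b} : Set V) ⊆ P c)) ∨
        ((P c ∩ {uu c, vv c}).ncard = 2 ∧
          (∃! z : V, z ∈ Z ∧ z ∈ P c ∧ γ z c = 1) ∧
          ∀ b ∈ C, b ≠ c → ¬ (({uu b, vv b} : Set V) ⊆ P c)) ∨
        ((P c ∩ {uu c, vv c}).ncard = 2 ∧ (∀ z ∈ Z, z ∈ P c → γ z c = 0) ∧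
          ∃! b : Fin k, b ∈ C ∧ b ≠ c ∧ ({uu b, vv b} : Set V) ⊆ P c)) :
    ∑ c ∈ C,
        ((if uu c ∈ P c then (1 : ℤ) else 0) + (if vv c ∈ P c then 1 else 0) -
          ∑ z ∈ Z, (γ z c : ℤ) * (if z ∈ P c then 1 else 0)) =
      (C.card : ℤ) := by
  classical
  have hdisj := hP.1
  have memu : ∀ {x : V} {b1 b2 : Fin k}, x ∈ P b1 → x ∈ P b2 → b1 = b2 := by
    intro x b1 b2 h1 h2
    by_contra hne
    exact Set.disjoint_left.mp (hdisj b1 b2 hne) h1 h2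
  have γ01 : ∀ z ∈ Z, ∀ c ∈ C, γ z c = 0 ∨ γ z c = 1 := by
    intro z hz c hc
    rw [hγ z hz c hc]
    split <;> simp
  -- abbreviation for the summand
  set F : Fin k → ℤ := fun c =>
    (if uu c ∈ P c then (1 : ℤ) else 0) + (if vv c ∈ P c then 1 else 0) -
      ∑ z ∈ Z, (γ z c : ℤ) * (if z ∈ P c then 1 else 0) with hF
  -- ncard formula
  have hcard : ∀ c ∈ C, ((P c ∩ {uu c, vv c}).ncard : ℤ) =
      (if uu c ∈ P c then (1 : ℤ) else 0) + (if vv c ∈ P c then 1 else 0) := by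
    intro c hc
    have huv := (hdel c hc).1
    by_cases hu : uu c ∈ P c <;> by_cases hv : vv c ∈ P c
    · have : P c ∩ {uu c, vv c} = {uu c, vv c} := by
        apply Set.inter_eq_right.mpr
        intro x hx
        rcases hx with rfl | hx
        · exact hu
        · rw [Set.mem_singleton_iff] at hx; subst hx; exact hv
      rw [this, Set.ncard_pair huv]
      simp [hu, hv]
    · have : P c ∩ {uu c, vv c} = {uu c} := by
        ext x
        simp only [Set.mem_inter_iff, Set.mem_insert_iff, Set.mem_singleton_iff]
        constructor
        · rintro ⟨hxP, rfl | rfl⟩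
          · rfl
          · exact absurd hxP hv
        · rintro rfl; exact ⟨hu, Or.inl rfl⟩
      rw [this, Set.ncard_singleton]
      simp [hu, hv]
    · have : P c ∩ {uu c, vv c} = {vv c} := by
        ext x
        simp only [Set.mem_inter_iff, Set.mem_insert_iff, Set.mem_singleton_iff]
        constructor
        · rintro ⟨hxP, rfl | rfl⟩
          · exact absurd hxP hu
          · rfl
        · rintro rfl; exact ⟨hv, Or.inr rfl⟩
      rw [this, Set.ncard_singleton]
      simp [hu, hv]
    · have : P c ∩ {uu c, vv c} = ∅ := by
        ext x
        simp only [Set.mem_inter_iff, Set.mem_insert_iff, Set.mem_singleton_iff,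
          Set.mem_empty_iff_false, iff_false, not_and]
        rintro hxP (rfl | rfl)
        · exact hu hxP
        · exact hv hxP
      rw [this, Set.ncard_empty]
      simp [hu, hv]
  have mem2 : ∀ c ∈ C, (P c ∩ {uu c, vv c}).ncard = 2 → uu c ∈ P c ∧ vv c ∈ P c := by
    intro c hc h2
    have := hcard c hc
    rw [h2] at this
    by_cases hu : uu c ∈ P c <;> by_cases hv : vv c ∈ P c <;>
      simp [hu, hv] at this ⊢
  have nonemp : ∀ c, (P c ∩ {uu c, vv c}).ncard ≠ 0 → ∃ x, x ∈ P c ∧ x ∈ ({uu c, vv c} : Set V) := by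
    intro c h
    obtain ⟨x, hx⟩ := Set.nonempty_of_ncard_ne_zero h
    exact ⟨x, hx.1, hx.2⟩
  -- gamma sums
  have B0 : ∀ c, (∀ z ∈ Z, z ∈ P c → γ z c = 0) →
      ∑ z ∈ Z, (γ z c : ℤ) * (if z ∈ P c then 1 else 0) = 0 := by
    intro c h
    apply Finset.sum_eq_zero
    intro z hz
    by_cases hzp : z ∈ P c
    · rw [h z hz hzp]; simp
    · simp [hzp]
  have B1 : ∀ c ∈ C, (∃! z : V, z ∈ Z ∧ z ∈ P c ∧ γ z c = 1) →
      ∑ z ∈ Z, (γ z c : ℤ) * (if z ∈ P c then 1 else 0) = 1 := by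
    rintro c hc ⟨z0, ⟨hz0Z, hz0P, hz0γ⟩, huniq⟩
    rw [Finset.sum_eq_single_of_mem z0 hz0Z]
    · simp [hz0P, hz0γ]
    · intro z hz hne
      by_cases hzp : z ∈ P c
      · rcases γ01 z hz c hc with h | h
        · simp [h]
        · exact absurd (huniq z ⟨hz, hzp, h⟩) hne
      · simp [hzp]
  -- value of F in each case
  have valn : ∀ c ∈ C, (∀ z ∈ Z, z ∈ P c → γ z c = 0) →
      F c = ((P c ∩ {uu c, vv c}).ncard : ℤ) := by
    intro c hc h0
    rw [hF]
    simp only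
    rw [B0 c h0, hcard c hc]
    ring
  have val3 : ∀ c ∈ C, (P c ∩ {uu c, vv c}).ncard = 2 →
      (∃! z : V, z ∈ Z ∧ z ∈ P c ∧ γ z c = 1) → F c = 1 := by
    intro c hc h2 hz
    rw [hF]
    simp only
    rw [B1 c hc hz, ← hcard c hc, h2]
    norm_num
  -- if some other pair is hosted in P c then c is in case 4
  have host4 : ∀ c ∈ C, (∃ b, b ∈ C ∧ b ≠ c ∧ ({uu b, vv b} : Set V) ⊆ P c) →
      (P c ∩ {uu c, vv c}).ncard = 2 ∧ (∀ z ∈ Z, z ∈ P c → γ z c = 0) ∧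
        ∃! b : Fin k, b ∈ C ∧ b ≠ c ∧ ({uu b, vv b} : Set V) ⊆ P c := by
    rintro c hc ⟨b, hbC, hbc, hbsub⟩
    rcases hconf c hc with ⟨hn0, -, b', hb'C, hb'c, hsub'⟩ | ⟨-, -, hnoh⟩ |
        ⟨-, -, hnoh⟩ | ⟨hn2, hg0, hex⟩
    · -- case 1 for c : impossible
      exfalso
      have hub : uu b ∈ P c := hbsub (by simp)
      have hvb : vv b ∈ P c := hbsub (by simp)
      -- b's own pair is not in P b
      have hbempty : P b ∩ {uu b, vv b} = ∅ := by
        ext x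
        simp only [Set.mem_inter_iff, Set.mem_insert_iff, Set.mem_singleton_iff,
          Set.mem_empty_iff_false, iff_false, not_and]
        rintro hxP (rfl | rfl)
        · exact hbc (memu hxP hub)
        · exact hbc (memu hxP hvb)
      have hbn0 : (P b ∩ {uu b, vv b}).ncard = 0 := by rw [hbempty]; exact Set.ncard_empty _
      rcases hconf b hbC with ⟨-, -, b'', hb''C, hb''b, hsub''⟩ | ⟨hn1, -, -⟩ |
          ⟨hn2', -, -⟩ | ⟨hn2', -, -⟩
      · -- b in case 1 with witness b''
        have : uu b ∈ P b'' := hsub'' (by simp)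
        have hbc'' : b'' = c := memu this hub
        have h1 : uu b'' ∈ P b'' := hsub'' (by simp)
        rw [hbc''] at h1
        have h2 : uu c ∈ P c ∩ {uu c, vv c} := ⟨h1, by simp⟩
        rw [Set.ncard_eq_zero (Set.toFinite _)] at hn0
        rw [hn0] at h2
        exact h2
      · omega
      · omega
      · omega
    · exact absurd hbsub (hnoh b hbC hbc)
    · exact absurd hbsub (hnoh b hbC hbc)
    · exact ⟨hn2, hg0, hex⟩
  -- if c's own pair is hosted elsewhere then P c misses its pair entirely
  have guestempty : ∀ c b : Fin k, b ≠ c → ({uu c, vv c} : Set V) ⊆ P b →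
      P c ∩ {uu c, vv c} = ∅ := by
    intro c b hbc hsub
    ext x
    simp only [Set.mem_inter_iff, Set.mem_insert_iff, Set.mem_singleton_iff,
      Set.mem_empty_iff_false, iff_false, not_and]
    rintro hxP (rfl | rfl)
    · exact hbc (memu (hsub (by simp)) hxP)
    · exact hbc (memu (hsub (by simp)) hxP)
  -- the pairing involution
  set σ : Fin k → Fin k := fun c =>
    if h : ∃ b, b ∈ C ∧ b ≠ c ∧ ({uu b, vv b} : Set V) ⊆ P c then h.choose
    else if h' : ∃ b, b ∈ C ∧ b ≠ c ∧ ({uu c, vv c} : Set V) ⊆ P b then h'.choose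
    else c with hσ
  have key : ∀ c ∈ C, (F c - 1) + (F (σ c) - 1) = 0 ∧ σ c ∈ C ∧ σ (σ c) = c ∧
      (F c - 1 ≠ 0 → σ c ≠ c) := by
    intro c hc
    rcases hconf c hc with ⟨hn0, hg0, b, hbC, hbc, hsub⟩ | ⟨hn1, hg0, hnoh⟩ |
        ⟨hn2, hz, hnoh⟩ | ⟨hn2, hg0, hex⟩
    · -- case 1
      have hnohost : ¬ ∃ b, b ∈ C ∧ b ≠ c ∧ ({uu b, vv b} : Set V) ⊆ P c := by
        rintro h
        have := (host4 c hc h).1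
        omega
      have hpair : ({uu c, vv c} : Set V) ⊆ P b := by
        intro x hx
        apply hsub
        rcases hx with rfl | hx
        · simp
        · rw [Set.mem_singleton_iff] at hx; subst hx; simp
      have hguest : ∃ b, b ∈ C ∧ b ≠ c ∧ ({uu c, vv c} : Set V) ⊆ P b := ⟨b, hbC, hbc, hpair⟩
      have hσc : σ c = hguest.choose := by rw [hσ]; simp only [dif_neg hnohost, dif_pos hguest]
      obtain ⟨hb0C, hb0c, hsub0⟩ := hguest.choose_spec
      set b0 := hguest.choose with hb0
      -- b0 hosts c's pair, so b0 is in case 4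
      have hhost0 : ∃ b', b' ∈ C ∧ b' ≠ b0 ∧ ({uu b', vv b'} : Set V) ⊆ P b0 :=
        ⟨c, hc, fun h => hb0c h.symm, hsub0⟩
      obtain ⟨hb0n2, hb0g0, hb0ex⟩ := host4 b0 hb0C hhost0
      have hFc : F c = 0 := by rw [valn c hc hg0, hn0]; rfl
      have hFb0 : F b0 = 2 := by rw [valn b0 hb0C hb0g0, hb0n2]; rfl
      have hσσ : σ b0 = c := by
        rw [hσ]
        simp only [dif_pos hhost0]
        exact hb0ex.unique hhost0.choose_spec ⟨hc, fun h => hb0c h.symm, hsub0⟩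
      refine ⟨?_, ?_, ?_, ?_⟩
      · rw [hσc, hFc, hFb0]; ring
      · rw [hσc]; exact hb0C
      · rw [hσc, hσσ]
      · intro _; rw [hσc]; exact fun h => hb0c h
    · -- case 2
      have hnohost : ¬ ∃ b, b ∈ C ∧ b ≠ c ∧ ({uu b, vv b} : Set V) ⊆ P c := by
        rintro ⟨b, hbC, hbc, hbsub⟩
        exact hnoh b hbC hbc hbsub
      have hnoguest : ¬ ∃ b, b ∈ C ∧ b ≠ c ∧ ({uu c, vv c} : Set V) ⊆ P b := by
        rintro ⟨b, hbC, hbc, hbsub⟩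
        have := guestempty c b hbc hbsub
        rw [this, Set.ncard_empty] at hn1
        exact absurd hn1 (by norm_num)
      have hσc : σ c = c := by rw [hσ]; simp only [dif_neg hnohost, dif_neg hnoguest]
      have hFc : F c = 1 := by rw [valn c hc hg0, hn1]; rfl
      exact ⟨by rw [hσc, hFc]; ring, by rw [hσc]; exact hc, by rw [hσc, hσc],
        fun h => absurd (by rw [hFc]; ring) h⟩
    · -- case 3
      have hnohost : ¬ ∃ b, b ∈ C ∧ b ≠ c ∧ ({uu b, vv b} : Set V) ⊆ P c := by
        rintro ⟨b, hbC, hbc, hbsub⟩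
        exact hnoh b hbC hbc hbsub
      obtain ⟨hu, hv⟩ := mem2 c hc hn2
      have hnoguest : ¬ ∃ b, b ∈ C ∧ b ≠ c ∧ ({uu c, vv c} : Set V) ⊆ P b := by
        rintro ⟨b, hbC, hbc, hbsub⟩
        exact hbc (memu (hbsub (by simp)) hu)
      have hσc : σ c = c := by rw [hσ]; simp only [dif_neg hnohost, dif_neg hnoguest]
      have hFc : F c = 1 := val3 c hc hn2 hz
      exact ⟨by rw [hσc, hFc]; ring, by rw [hσc]; exact hc, by rw [hσc, hσc],
        fun h => absurd (by rw [hFc]; ring) h⟩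
    · -- case 4
      obtain ⟨b, ⟨hbC, hbc, hbsub⟩, huniq⟩ := hex
      have hhost : ∃ b, b ∈ C ∧ b ≠ c ∧ ({uu b, vv b} : Set V) ⊆ P c := ⟨b, hbC, hbc, hbsub⟩
      have hσc : σ c = hhost.choose := by rw [hσ]; simp only [dif_pos hhost]
      obtain ⟨hb0C, hb0c, hsub0⟩ := hhost.choose_spec
      set b0 := hhost.choose with hb0
      -- b0's pair is hosted in P c, so b0 is in case 1
      have hb0empty : P b0 ∩ {uu b0, vv b0} = ∅ :=
        guestempty b0 c (fun h => hb0c h.symm) hsub0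
      have hb0n0 : (P b0 ∩ {uu b0, vv b0}).ncard = 0 := by
        rw [hb0empty]; exact Set.ncard_empty _
      have hb0g0 : ∀ z ∈ Z, z ∈ P b0 → γ z b0 = 0 := by
        rcases hconf b0 hb0C with ⟨-, hg, -⟩ | ⟨hn1, -, -⟩ | ⟨hn2', -, -⟩ | ⟨hn2', -, -⟩
        · exact hg
        · omega
        · omega
        · omega
      have hFc : F c = 2 := by rw [valn c hc hg0, hn2]; rfl
      have hFb0 : F b0 = 0 := by rw [valn b0 hb0C hb0g0, hb0n0]; rfl
      have hb0nohost : ¬ ∃ b', b' ∈ C ∧ b' ≠ b0 ∧ ({uu b', vv b'} : Set V) ⊆ P b0 := by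
        rintro h
        have := (host4 b0 hb0C h).1
        omega
      have hb0guest : ∃ b', b' ∈ C ∧ b' ≠ b0 ∧ ({uu b0, vv b0} : Set V) ⊆ P b' :=
        ⟨c, hc, fun h => hb0c h.symm, hsub0⟩
      have hσσ : σ b0 = c := by
        rw [hσ]
        simp only [dif_neg hb0nohost, dif_pos hb0guest]
        obtain ⟨h1, h2, h3⟩ := hb0guest.choose_spec
        exact memu (x := uu b0) (h3 (by simp)) (hsub0 (by simp))
      refine ⟨?_, ?_, ?_, ?_⟩
      · rw [hσc, hFc, hFb0]; ring
      · rw [hσc]; exact hb0C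
      · rw [hσc, hσσ]
      · intro _; rw [hσc]; exact fun h => hb0c h
  have hsum0 : ∑ c ∈ C, (F c - 1) = 0 := by
    exact Finset.sum_involution (fun c _ => σ c)
      (fun a ha => (key a ha).1)
      (fun a ha h => (key a ha).2.2.2 h)
      (fun a ha => (key a ha).2.1)
      (fun a ha => (key a ha).2.2.1)
  have := Finset.sum_sub_distrib (s := C) (f := F) (g := fun _ => (1 : ℤ))
  rw [this] at hsum0
  simp only [Finset.sum_const, nsmul_eq_mul, mul_one] at hsum0
  linarith [hsum0]
end
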